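/- Let S be an additively reduced semidomain and G a linearly ordered torsion-free abelian group. If f = ∑_{i=0}^∞ s_i x^{g_i} ∈ S⟦G⟧ with all s_i nonzero and strictly increasing exponents satisfies g_1 − g_0 < g_{i+1} − g_i for every i ≥ 1, then f is monolithic. -/

import Mathlib

/-- Witness that `S` is a semidomain: an injective semiring hom into an integral domain. -/
structure SemidomainWitness (S : Type*) [CommSemiring S] where
  D : Type
  [commRing : CommRing D]
  [isDomain : IsDomain D]
  emb : S →+* D
  inj : Function.Injective emb

/-- `S` is a semidomain, i.e. (isomorphic to) a subsemiring of an integral domain. -/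
def IsSemidomain (S : Type*) [CommSemiring S] : Prop := Nonempty (SemidomainWitness S)

/-- `S` is additively reduced: `0` is the only additively invertible element. -/
def AddReduced (S : Type*) [AddZeroClass S] : Prop := ∀ a b : S, a + b = 0 → a = 0

/-- `s` is an atom of the additive monoid `(S, +)` (for `S` additively reduced):
it is nonzero and cannot be written as a sum of two nonzero elements. -/
def IsAddAtom {S : Type*} [AddZeroClass S] (s : S) : Prop :=
  s ≠ 0 ∧ ∀ a b : S, s = a + b → a = 0 ∨ b = 0

/-- `S` is additively Furstenberg: every nonzero element is divisible in `(S, +)`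
by an additive atom. -/
def AddFurstenberg (S : Type*) [AddZeroClass S] : Prop :=
  ∀ s : S, s ≠ 0 → ∃ a t : S, IsAddAtom a ∧ s = a + t


section Series
variable {S : Type*} [CommSemiring S] {G : Type*} [AddCommGroup G] [LinearOrder G] [IsOrderedAddMonoid G]

/-- `f` belongs to the group series semidomain `S⟦G⟧`: its support is contained in the range
of a strictly increasing sequence of exponents, so `f` is a formal sum `∑_{i=0}^∞ s_i x^{g_i}`. -/
def InSeries (f : HahnSeries G S) : Prop :=
  ∃ g : ℕ → G, StrictMono g ∧ f.support ⊆ Set.range g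

/-- A monomial `s·x^g` in `S⟦G⟧`. -/
def IsMonomialSeries (f : HahnSeries G S) : Prop :=
  ∃ (g : G) (s : S), f = HahnSeries.single g s

/-- `f` is monolithic in `S⟦G⟧`: every factorization of `f` within `S⟦G⟧` has a
monomial factor. -/
def MonolithicSeries (f : HahnSeries G S) : Prop :=
  f ≠ 0 ∧ ∀ p q : HahnSeries G S, InSeries p → InSeries q → f = p * q →
    IsMonomialSeries p ∨ IsMonomialSeries q

/-- `f` is a unit of the semidomain `S⟦G⟧`. -/
def IsUnitSeries (f : HahnSeries G S) : Prop :=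
  InSeries f ∧ ∃ h : HahnSeries G S, InSeries h ∧ f * h = 1

/-- `f` is irreducible in the multiplicative monoid of nonzero elements of `S⟦G⟧`. -/
def IrreducibleSeries (f : HahnSeries G S) : Prop :=
  InSeries f ∧ f ≠ 0 ∧ ¬ IsUnitSeries f ∧
    ∀ p q : HahnSeries G S, InSeries p → InSeries q → f = p * q →
      IsUnitSeries p ∨ IsUnitSeries q

end Series


section AuxMonolithic
open Pointwise

variable {S : Type*} [CommSemiring S] {G : Type*} [AddCommGroup G] [LinearOrder G] [IsOrderedAddMonoid G]

lemma aux_sum_eq_zero (hred : AddReduced S) {ι : Type*} {t : Finset ι} {F : ι → S}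
    (h : ∑ i ∈ t, F i = 0) : ∀ i ∈ t, F i = 0 := by
  classical
  intro i hi
  have := Finset.add_sum_erase t F hi
  rw [h] at this
  exact hred _ _ this

lemma aux_supp_mul (hred : AddReduced S)
    (hnzd : ∀ x y : S, x ≠ 0 → y ≠ 0 → x * y ≠ 0)
    (p q : HahnSeries G S) : (p * q).support = p.support + q.support := by
  apply Set.Subset.antisymm HahnSeries.support_mul_subset
  rintro e ⟨u, hu, v, hv, rfl⟩
  rw [HahnSeries.mem_support, HahnSeries.coeff_mul]
  intro h0
  have hmem : (u, v) ∈ Finset.addAntidiagonal p.isPWO_support q.isPWO_support (u + v) := by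
    refine Finset.mem_addAntidiagonal.mpr ?_
    exact ⟨hu, hv, rfl⟩
  have := aux_sum_eq_zero hred h0 (u, v) hmem
  exact hnzd _ _ hu hv this

lemma aux_key (g : ℕ → G) (hg : StrictMono g)
    (hgap : ∀ i : ℕ, 1 ≤ i → g 1 - g 0 < g (i + 1) - g i)
    (A B : Set G) (hAB : Set.range g = A + B)
    (a b : G) (ha : a ∈ A) (hb : b ∈ B)
    (hamin : ∀ u ∈ A, a ≤ u) (hbmin : ∀ v ∈ B, b ≤ v)
    (x : G) (hx : x ∈ A) (hax : a < x) (y : G) (hy : y ∈ B) (hxy : x + y = g 1)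
    (b' : G) (hb' : b' ∈ B) (hbb' : b < b') : False := by
  -- g 0 = a + b
  have hg0 : g 0 = a + b := by
    have hab : a + b ∈ Set.range g := by rw [hAB]; exact Set.add_mem_add ha hb
    have h1 : g 0 ≤ a + b := by
      obtain ⟨n, hn⟩ := hab; rw [← hn]; exact hg.monotone (Nat.zero_le n)
    have h2 : a + b ≤ g 0 := by
      have : g 0 ∈ A + B := by rw [← hAB]; exact ⟨0, rfl⟩
      obtain ⟨u, hu, v, hv, huv⟩ := this
      rw [← huv]; exact add_le_add (hamin u hu) (hbmin v hv)
    exact le_antisymm h1 h2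
  -- x + b = g 1
  have hxb : x + b = g 1 := by
    obtain ⟨m, hm⟩ : x + b ∈ Set.range g := by rw [hAB]; exact Set.add_mem_add hx hb
    have hgt : g 0 < g m := by rw [hm, hg0]; exact add_lt_add_left hax b
    have hm1 : 1 ≤ m := hg.lt_iff_lt.mp hgt
    have hle : x + b ≤ g 1 := by rw [← hxy]; exact add_le_add_right (hbmin y hy) x
    exact le_antisymm hle (hm ▸ hg.monotone hm1)
  -- a + b' = g j with j ≥ 1
  obtain ⟨j, hj⟩ : a + b' ∈ Set.range g := by rw [hAB]; exact Set.add_mem_add ha hb'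
  have hj1 : 1 ≤ j := by
    have : g 0 < g j := by rw [hj, hg0]; exact add_lt_add_right hbb' a
    exact hg.lt_iff_lt.mp this
  -- x + b' = g k
  obtain ⟨k, hk⟩ : x + b' ∈ Set.range g := by rw [hAB]; exact Set.add_mem_add hx hb'
  have hkey : g k = g j + (g 1 - g 0) := by
    rw [hk, hj, ← hxb, hg0]; abel
  have hjk : g j < g k := by
    rw [hkey]
    exact lt_add_of_pos_right (g j) (sub_pos.mpr (hg Nat.zero_lt_one))
  have hk1 : g (j + 1) ≤ g k := hg.monotone (hg.lt_iff_lt.mp hjk)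
  rw [hkey] at hk1
  exact absurd hk1 (not_le.mpr (lt_sub_iff_add_lt'.mp (hgap j hj1)))

end AuxMonolithic

open Pointwise

/-- If `f = ∑_{i=0}^∞ s_i x^{g_i} ∈ S⟦G⟧` has all `s_i ≠ 0`, strictly increasing exponents,
and `g_1 - g_0 < g_{i+1} - g_i` for every `i ≥ 1`, then `f` is monolithic. -/
theorem series_monolithic_of_first_gap_least
    {S : Type*} [CommSemiring S] {G : Type*} [AddCommGroup G] [LinearOrder G] [IsOrderedAddMonoid G]
    (hS : IsSemidomain S) (hred : AddReduced S)
    (s : ℕ → S) (g : ℕ → G) (hg : StrictMono g) (hs : ∀ i, s i ≠ 0)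
    (f : HahnSeries G S)
    (hcoeff : ∀ i, f.coeff (g i) = s i) (hsupp : f.support = Set.range g)
    (hgap : ∀ i : ℕ, 1 ≤ i → g 1 - g 0 < g (i + 1) - g i) :
    MonolithicSeries f := by
  classical
  obtain ⟨W⟩ := hS
  letI := W.commRing
  letI := W.isDomain
  have hnzd : ∀ x y : S, x ≠ 0 → y ≠ 0 → x * y ≠ 0 := by
    intro x y hx hy hxy
    have h1 : W.emb (x * y) = 0 := by rw [hxy, map_zero]
    rw [map_mul] at h1
    rcases mul_eq_zero.mp h1 with h | h
    · exact hx (W.inj (by rw [h, map_zero]))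
    · exact hy (W.inj (by rw [h, map_zero]))
  have hf0 : f ≠ 0 := by
    intro h
    have hmem : g 0 ∈ f.support := by rw [hsupp]; exact ⟨0, rfl⟩
    rw [h] at hmem
    simp [HahnSeries.support_zero] at hmem
  refine ⟨hf0, ?_⟩
  intro p q _ _ hfpq
  by_contra hcon
  push_neg at hcon
  obtain ⟨hpm, hqm⟩ := hcon
  have hp0 : p ≠ 0 := by rintro rfl; rw [zero_mul] at hfpq; exact hf0 hfpq
  have hq0 : q ≠ 0 := by rintro rfl; rw [mul_zero] at hfpq; exact hf0 hfpq
  have hpne : p.support.Nonempty := HahnSeries.support_nonempty_iff.mpr hp0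
  have hqne : q.support.Nonempty := HahnSeries.support_nonempty_iff.mpr hq0
  set a := p.isWF_support.min hpne with ha_def
  set b := q.isWF_support.min hqne with hb_def
  have ha : a ∈ p.support := p.isWF_support.min_mem hpne
  have hb : b ∈ q.support := q.isWF_support.min_mem hqne
  have hamin : ∀ u ∈ p.support, a ≤ u := fun u hu => p.isWF_support.min_le hpne hu
  have hbmin : ∀ v ∈ q.support, b ≤ v := fun v hv => q.isWF_support.min_le hqne hv
  -- a non-monomial series has a second support element above the minimum
  have hsecond : ∀ (r : HahnSeries G S), ¬ IsMonomialSeries r →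
      ∀ c, (∀ u ∈ r.support, c ≤ u) → ∃ c' ∈ r.support, c < c' := by
    intro r hr c hcmin
    by_contra hno
    push_neg at hno
    apply hr
    refine ⟨c, r.coeff c, ?_⟩
    ext e
    by_cases he : e = c
    · subst he; rw [HahnSeries.coeff_single_same]
    · rw [HahnSeries.coeff_single_of_ne he]
      by_contra hne
      have hmem : e ∈ r.support := hne
      exact he (le_antisymm (hno e hmem) (hcmin e hmem))
  obtain ⟨a', ha', haa'⟩ := hsecond p hpm a hamin
  obtain ⟨b', hb', hbb'⟩ := hsecond q hqm b hbmin
  have hAB : Set.range g = p.support + q.support := by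
    rw [← hsupp, hfpq]; exact aux_supp_mul hred hnzd p q
  obtain ⟨x, hx, y, hy, hxy⟩ : g 1 ∈ p.support + q.support := by
    rw [← hAB]; exact ⟨1, rfl⟩
  have hcase : a < x ∨ b < y := by
    by_contra h
    push_neg at h
    have hxa : x = a := le_antisymm h.1 (hamin x hx)
    have hyb : y = b := le_antisymm h.2 (hbmin y hy)
    obtain ⟨u, hu, v, hv, huv⟩ : g 0 ∈ p.support + q.support := by
      rw [← hAB]; exact ⟨0, rfl⟩
    have hle : g 1 ≤ g 0 := by
      rw [← hxy, ← huv, hxa, hyb]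
      exact add_le_add (hamin u hu) (hbmin v hv)
    exact absurd hle (not_le.mpr (hg Nat.zero_lt_one))
  rcases hcase with hax | hby
  · exact aux_key g hg hgap p.support q.support hAB a b ha hb hamin hbmin
      x hx hax y hy hxy b' hb' hbb'
  · exact aux_key g hg hgap q.support p.support (by rw [hAB, add_comm]) b a hb ha hbmin hamin
      y hy hby x hx (by rw [add_comm]; exact hxy) a' ha' haa'
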